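/- arXiv:1312.1934 — 2 statements merged into one kernel-verified Lean document; each statement's English description precedes it below -/
import Mathlib

section
/- The map p : S^1 × Y → S^1, p(z,x) = z^{-k}·φ(x), is a locally trivial fiber bundle with model fiber F = p^{-1}({1}) = {(z,x) ∈ S^1 × Y : φ(x) = z^k}: for every w ∈ S^1 there exists a trivialization of p with fiber F whose base set contains w. -/
open Complex Set

lemma circle_exp_zpow (t : ℝ) (n : ℤ) : Circle.exp t ^ n = Circle.exp (n * t) := by
  have h := map_zsmul Circle.expHom n t
  simpa [zsmul_eq_mul, ← ofMul_zpow] using h.symm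

/-- local section: sroot w k u is a `-k`-th root of `u`, depending continuously on `u`
near `w`. -/
noncomputable def sroot (w : Circle) (k : ℤ) : Circle → Circle :=
  fun u => Circle.exp (-((Complex.arg w + Complex.arg ((u : ℂ) * (w : ℂ)⁻¹)) / k))

lemma sroot_spec (w : Circle) (k : ℤ) (hk : k ≠ 0) (u : Circle) :
    sroot w k u ^ (-k) = u := by
  have harg : ∀ v : Circle, Circle.exp (Complex.arg v) = v := Circle.exp_arg
  rw [sroot, circle_exp_zpow]
  have hE : ((-k : ℤ) : ℝ) * -((Complex.arg w + Complex.arg ((u : ℂ) * (w : ℂ)⁻¹)) / k)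
      = Complex.arg w + Complex.arg ((u : ℂ) * (w : ℂ)⁻¹) := by
    field_simp; push_cast; ring
  rw [hE]
  have : ((u : ℂ) * (w : ℂ)⁻¹) = ((u * w⁻¹ : Circle) : ℂ) := by simp
  rw [this, Circle.exp_add, harg, harg, mul_comm, inv_mul_cancel_right]

/-- The map `p : S¹ × Y → S¹`, `p(z,x) = z^{-k}·φ(x)` (`k ≠ 0`), is a locally trivial fiber
bundle with model fiber `F = p⁻¹({1}) = {(z,x) : φ(x) = z^k}`: every `w ∈ S¹` lies in the base
set of some trivialization of `p` with fiber `F`. -/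
theorem stmt_2 (Y : Type*) [TopologicalSpace Y] (φ : C(Y, Circle)) (k : ℤ) (hk : k ≠ 0) :
    ((fun q : Circle × Y => q.1 ^ (-k) * φ q.2) ⁻¹' {1}
      = {q : Circle × Y | φ q.2 = q.1 ^ k}) ∧
    ∀ w : Circle,
      ∃ e : Bundle.Trivialization (↥((fun q : Circle × Y => q.1 ^ (-k) * φ q.2) ⁻¹' {1}))
              (fun q : Circle × Y => q.1 ^ (-k) * φ q.2),
        w ∈ e.baseSet := by
  set p : Circle × Y → Circle := fun q => q.1 ^ (-k) * φ q.2 with hp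
  have hcont : Continuous p := by
    exact (continuous_fst.zpow _).mul (φ.continuous.comp continuous_snd)
  constructor
  · ext q
    simp only [mem_preimage, mem_singleton_iff, mem_setOf_eq, hp, zpow_neg]
    constructor
    · intro h
      have := congrArg (fun z => q.1 ^ k * z) h
      simpa [mul_assoc, ← mul_assoc, mul_inv_cancel_left, eq_comm] using this
    · intro h
      rw [h]; group
  · intro w
    -- base set
    set U : Set Circle := {u : Circle | ((u : ℂ) * (w : ℂ)⁻¹) ∈ Complex.slitPlane} with hU
    have hUopen : IsOpen U := by
      have : Continuous fun u : Circle => (u : ℂ) * (w : ℂ)⁻¹ :=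
        (continuous_induced_dom).mul continuous_const
      exact Complex.isOpen_slitPlane.preimage this
    have hwU : w ∈ U := by
      simp [hU, mul_inv_cancel₀ (Circle.coe_ne_zero w), Complex.one_mem_slitPlane]
    set s : Circle → Circle := sroot w k with hs
    have hsspec : ∀ u, s u ^ (-k) = u := fun u => sroot_spec w k hk u
    have hsU : ContinuousOn s U := by
      intro u hu
      apply ContinuousAt.continuousWithinAt
      have h1 : ContinuousAt (fun u : Circle => (u : ℂ) * (w : ℂ)⁻¹) u :=
        ((continuous_induced_dom).mul continuous_const).continuousAt
      have h2 : ContinuousAt Complex.arg ((u : ℂ) * (w : ℂ)⁻¹) :=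
        Complex.continuousAt_arg hu
      have h3 : ContinuousAt (fun u : Circle => Complex.arg ((u : ℂ) * (w : ℂ)⁻¹)) u :=
        ContinuousAt.comp (g := Complex.arg)
          (f := fun u : Circle => (u : ℂ) * (w : ℂ)⁻¹) h2 h1
      exact Circle.exp.continuous.continuousAt.comp
        (((continuousAt_const.add h3).div_const _).neg)
    -- membership of image in fiber
    have hmemF : ∀ q : Circle × Y, ((s (p q))⁻¹ * q.1, q.2) ∈ p ⁻¹' {1} := by
      intro q
      simp only [mem_preimage, mem_singleton_iff, hp]
      have : ((s (p q))⁻¹ * q.1) ^ (-k) = (s (p q) ^ (-k))⁻¹ * q.1 ^ (-k) := by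
        rw [mul_zpow, inv_zpow]
      rw [this, hsspec, mul_assoc]
      exact inv_mul_cancel (p q)
    refine ⟨⟨⟨⟨⟨fun q => (p q, ⟨((s (p q))⁻¹ * q.1, q.2), hmemF q⟩),
        fun z => (s z.1 * (z.2 : Circle × Y).1, (z.2 : Circle × Y).2),
        p ⁻¹' U, U ×ˢ univ, ?_, ?_, ?_, ?_⟩, ?_, ?_⟩, ?_, ?_⟩,
        U, hUopen, rfl, rfl, fun q _ => rfl⟩, hwU⟩
    · -- map_source
      intro q hq
      exact ⟨hq, trivial⟩
    · -- map_target
      rintro ⟨u, f⟩ ⟨hu, -⟩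
      have hf : p (f : Circle × Y) = 1 := f.2
      show p (s u * (f : Circle × Y).1, (f : Circle × Y).2) ∈ U
      have : p (s u * (f : Circle × Y).1, (f : Circle × Y).2) = u := by
        simp only [hp]
        show (s u * (f : Circle × Y).1) ^ (-k) * φ (f : Circle × Y).2 = u
        rw [mul_zpow, hsspec, mul_assoc]
        have : (f : Circle × Y).1 ^ (-k) * φ (f : Circle × Y).2 = 1 := hf
        rw [this, mul_one]
      rw [this]; exact hu
    · -- left_inv
      intro q _
      show (s (p q) * ((s (p q))⁻¹ * q.1), q.2) = q
      rw [mul_inv_cancel_left]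
    · -- right_inv
      rintro ⟨u, f⟩ ⟨hu, -⟩
      have hf : p (f : Circle × Y) = 1 := f.2
      have hpu : p (s u * (f : Circle × Y).1, (f : Circle × Y).2) = u := by
        simp only [hp]
        show (s u * (f : Circle × Y).1) ^ (-k) * φ (f : Circle × Y).2 = u
        rw [mul_zpow, hsspec, mul_assoc]
        have : (f : Circle × Y).1 ^ (-k) * φ (f : Circle × Y).2 = 1 := hf
        rw [this, mul_one]
      refine Prod.ext hpu ?_
      apply Subtype.ext
      show ((s (p (s u * (f : Circle × Y).1, (f : Circle × Y).2)))⁻¹ *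
        (s u * (f : Circle × Y).1), (f : Circle × Y).2) = (f : Circle × Y)
      rw [hpu, inv_mul_cancel_left]
    rotate_left 2
    · -- open_source
      exact hUopen.preimage hcont
    · -- open_target
      exact hUopen.prod isOpen_univ
    · -- continuousOn_toFun
      apply ContinuousOn.prodMk (hcont.continuousOn)
      rw [Topology.IsInducing.subtypeVal.continuousOn_iff]
      apply ContinuousOn.prodMk ?_ continuous_snd.continuousOn
      have hc1 : ContinuousOn (fun q : Circle × Y => s (p q)) (p ⁻¹' U) :=
        hsU.comp hcont.continuousOn (fun q hq => hq)
      exact hc1.inv.mul continuous_fst.continuousOn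
    · -- continuousOn_invFun
      apply ContinuousOn.prodMk
      · have hc2 : ContinuousOn
            (fun z : Circle × ↥(p ⁻¹' {1}) => s z.1) (U ×ˢ univ) :=
          hsU.comp continuousOn_fst (fun z hz => hz.1)
        exact hc2.mul
          ((continuous_fst.comp (continuous_subtype_val.comp continuous_snd)).continuousOn)
      · exact (continuous_snd.comp (continuous_subtype_val.comp continuous_snd)).continuousOn
end

section
/- If J is the image of a topological embedding g of the closed unit ball D^n = {y ∈ ℝ^n : ‖y‖ ≤ 1} into B satisfying g(y) = (0, y) whenever ‖y‖ = 1, then for every integer k the k-twist spin S_k ⊆ Σ is homeomorphic to the (n+1)-dimensional sphere. -/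
noncomputable section

/-- The ball `B = {(b,x) ∈ ℂ × ℝⁿ : |b|² + ‖x‖² ≤ 1}`. -/
def diskBall (n : ℕ) : Set (ℂ × EuclideanSpace ℝ (Fin n)) :=
  {p | ‖p.1‖ ^ 2 + ‖p.2‖ ^ 2 ≤ 1}

/-- The boundary sphere `∂B = {(b,x) : |b|² + ‖x‖² = 1}`. -/
def diskBoundary (n : ℕ) : Set (ℂ × EuclideanSpace ℝ (Fin n)) :=
  {p | ‖p.1‖ ^ 2 + ‖p.2‖ ^ 2 = 1}

/-- The sphere `Σ = {(a,b,x) ∈ ℂ × ℂ × ℝⁿ : |a|² + |b|² + ‖x‖² = 2}` of dimension `n+3`. -/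
def bigSphere (n : ℕ) : Set (ℂ × ℂ × EuclideanSpace ℝ (Fin n)) :=
  {q | ‖q.1‖ ^ 2 + ‖q.2.1‖ ^ 2 + ‖q.2.2‖ ^ 2 = 2}

/-- The `k`-twist spin of the disk knot `J ⊆ B`:
`S_k = {(a,b,x) ∈ Σ : (|a| ≥ 1 ∧ ((a/|a|)^{-k}·b, x) ∈ J) ∨ (|a| ≤ 1 ∧ b = 0)}`. -/
def twistSpin (n : ℕ) (k : ℤ) (J : Set (ℂ × EuclideanSpace ℝ (Fin n))) :
    Set (ℂ × ℂ × EuclideanSpace ℝ (Fin n)) :=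
  {q ∈ bigSphere n |
    (1 ≤ ‖q.1‖ ∧ ((q.1 / ‖q.1‖) ^ (-k) * q.2.1, q.2.2) ∈ J) ∨
    (‖q.1‖ ≤ 1 ∧ q.2.1 = 0)}

/-- The complement `W = Σ \ S_k` of the `k`-twist spin. -/
def spinComplement (n : ℕ) (k : ℤ) (J : Set (ℂ × EuclideanSpace ℝ (Fin n))) :
    Set (ℂ × ℂ × EuclideanSpace ℝ (Fin n)) :=
  bigSphere n \ twistSpin n k J

/-- A homeomorphism of ambient spaces carrying one set onto another restricts to a
homeomorphism of the subsets. -/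
def Homeomorph.setCongrOf {X Y : Type*} [TopologicalSpace X] [TopologicalSpace Y]
    (e : X ≃ₜ Y) {s : Set X} {t : Set Y} (h : ∀ x, x ∈ s ↔ e x ∈ t) : s ≃ₜ t where
  toFun x := ⟨e x, (h x).1 x.2⟩
  invFun y := ⟨e.symm y, (h _).2 (by simpa using y.2)⟩
  left_inv x := by ext : 1; simp
  right_inv y := by ext : 1; simp
  continuous_toFun := (e.continuous.comp continuous_subtype_val).subtype_mk _
  continuous_invFun := (e.symm.continuous.comp continuous_subtype_val).subtype_mk _

/-- The boundary `∂B` is homeomorphic to the Euclidean `(n+1)`-sphere. -/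
lemma diskBoundary_homeo_sphere (n : ℕ) :
    Nonempty (↥(diskBoundary n) ≃ₜ
      ↥(Metric.sphere (0 : EuclideanSpace ℝ (Fin (n + 2))) 1)) := by
  set F := WithLp 2 (ℂ × EuclideanSpace ℝ (Fin n)) with hF
  haveI : FiniteDimensional ℝ F :=
    LinearEquiv.finiteDimensional (WithLp.linearEquiv 2 ℝ _).symm
  have hrank : Module.finrank ℝ F = n + 2 := by
    rw [(WithLp.linearEquiv 2 ℝ (ℂ × EuclideanSpace ℝ (Fin n))).finrank_eq,
      Module.finrank_prod, Complex.finrank_real_complex, finrank_euclideanSpace_fin]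
    omega
  let e₁ : F ≃ₗᵢ[ℝ] EuclideanSpace ℝ (Fin (n + 2)) :=
    ((stdOrthonormalBasis ℝ F).reindex (finCongr hrank)).repr
  have h₁ : ∀ x : F, x ∈ Metric.sphere (0 : F) 1 ↔
      e₁.toHomeomorph x ∈ Metric.sphere (0 : EuclideanSpace ℝ (Fin (n + 2))) 1 := by
    intro x
    simp [mem_sphere_zero_iff_norm]
    exact (iff_of_eq (congrArg (· = (1:ℝ)) (e₁.norm_map x))).symm
  have h₀ : ∀ x : F, x ∈ Metric.sphere (0 : F) 1 ↔
      (WithLp.prodContinuousLinearEquiv 2 ℝ ℂ (EuclideanSpace ℝ (Fin n))).toHomeomorph x ∈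
        diskBoundary n := by
    intro x
    have hsq : ‖x‖ ^ 2 = ‖x.fst‖ ^ 2 + ‖x.snd‖ ^ 2 := WithLp.prod_norm_sq_eq_of_L2 x
    simp only [mem_sphere_zero_iff_norm, diskBoundary, Set.mem_setOf_eq]
    constructor
    · intro h
      rw [h] at hsq
      simpa using hsq.symm
    · intro h
      have : ‖x‖ ^ 2 = 1 := by
        rw [hsq]; simpa using h
      nlinarith [norm_nonneg x]
  exact ⟨(((WithLp.prodContinuousLinearEquiv 2 ℝ ℂ
      (EuclideanSpace ℝ (Fin n))).toHomeomorph.setCongrOf h₀).symm).trans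
      (e₁.toHomeomorph.setCongrOf h₁)⟩

set_option maxHeartbeats 2000000 in
/-- If `J` is the image of a topological embedding `g` of the closed unit ball `Dⁿ` into `B`
with `g(y) = (0, y)` whenever `‖y‖ = 1`, then for every integer `k` the `k`-twist spin
`S_k ⊆ Σ` is homeomorphic to the `(n+1)`-dimensional sphere. -/
theorem stmt_11 (n : ℕ) (k : ℤ)
    (J : Set (ℂ × EuclideanSpace ℝ (Fin n)))
    (g : {y : EuclideanSpace ℝ (Fin n) // ‖y‖ ≤ 1} → ℂ × EuclideanSpace ℝ (Fin n))
    (hg : Topology.IsEmbedding g)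
    (hgB : Set.range g ⊆ diskBall n)
    (hgbd : ∀ y : {y : EuclideanSpace ℝ (Fin n) // ‖y‖ ≤ 1}, ‖(y : EuclideanSpace ℝ (Fin n))‖ = 1 →
        g y = (0, (y : EuclideanSpace ℝ (Fin n))))
    (hJ : J = Set.range g) :
    Nonempty (↥(twistSpin n k J) ≃ₜ
      ↥(Metric.sphere (0 : EuclideanSpace ℝ (Fin (n + 2))) 1)) := by
  classical
  obtain ⟨e⟩ := diskBoundary_homeo_sphere n
  -- abbreviations
  have hs2pos : (0:ℝ) < Real.sqrt 2 := Real.sqrt_pos.mpr (by norm_num)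
  have hs2sq : Real.sqrt 2 ^ 2 = 2 := Real.sq_sqrt (by norm_num)
  have hmax : ∀ y : EuclideanSpace ℝ (Fin n), (0:ℝ) < max 1 ‖y‖ :=
    fun y => lt_of_lt_of_le one_pos (le_max_left _ _)
  have hmaxle : ∀ y : EuclideanSpace ℝ (Fin n), ‖(max 1 ‖y‖)⁻¹ • y‖ ≤ 1 := by
    intro y
    rw [norm_smul, Real.norm_eq_abs, abs_inv, abs_of_pos (hmax y)]
    calc (max 1 ‖y‖)⁻¹ * ‖y‖ ≤ (max 1 ‖y‖)⁻¹ * (max 1 ‖y‖) := by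
          have h1 : (0:ℝ) ≤ (max 1 ‖y‖)⁻¹ := inv_nonneg.mpr (hmax y).le
          have h2 : ‖y‖ ≤ max 1 ‖y‖ := le_max_right _ _
          exact mul_le_mul_of_nonneg_left h2 h1
      _ = 1 := inv_mul_cancel₀ (hmax y).ne'
  set gE : EuclideanSpace ℝ (Fin n) → ℂ × EuclideanSpace ℝ (Fin n) :=
    fun y => g ⟨(max 1 ‖y‖)⁻¹ • y, hmaxle y⟩ with hgEdef
  have gE_cont : Continuous gE := by
    apply hg.continuous.comp
    apply Continuous.subtype_mk
    exact (((continuous_const.max continuous_norm).inv₀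
      (fun y => (hmax y).ne')).smul continuous_id)
  have gE_eq : ∀ (y : EuclideanSpace ℝ (Fin n)) (h : ‖y‖ ≤ 1), gE y = g ⟨y, h⟩ := by
    intro y h
    simp only [hgEdef]
    congr 1
    ext : 1
    simp [max_eq_left h]
  set Q : ℂ × EuclideanSpace ℝ (Fin n) → ℝ :=
    fun p => ‖p.1‖ ^ 2 + ‖p.2‖ ^ 2 with hQdef
  have Q_cont : Continuous Q :=
    ((continuous_norm.comp continuous_fst).pow 2).add
      ((continuous_norm.comp continuous_snd).pow 2)
  have hQg : ∀ y : {y : EuclideanSpace ℝ (Fin n) // ‖y‖ ≤ 1}, Q (g y) ≤ 1 :=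
    fun y => hgB (Set.mem_range_self y)
  have hQg0 : ∀ y : {y : EuclideanSpace ℝ (Fin n) // ‖y‖ ≤ 1}, 0 ≤ Q (g y) := by
    intro y
    have := sq_nonneg (‖(g y).1‖); have := sq_nonneg ‖(g y).2‖
    simp only [hQdef]; positivity
  have habs_theta : ∀ c : ℂ, c ≠ 0 → ‖c / (‖c‖ : ℂ)‖ = 1 := by
    intro c hc
    rw [norm_div, Complex.norm_real, Real.norm_eq_abs, abs_of_nonneg (norm_nonneg c),
      div_self ((norm_ne_zero_iff.mpr hc))]
  -- the two pieces of the map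
  set F1 : ℂ × EuclideanSpace ℝ (Fin n) → ℂ × ℂ × EuclideanSpace ℝ (Fin n) :=
    fun w => ((w.1 / (‖w.1‖ : ℂ)) *
        ((Real.sqrt (2 - Q (gE (Real.sqrt 2 • w.2))) : ℝ) : ℂ),
      (w.1 / (‖w.1‖ : ℂ)) ^ k * (gE (Real.sqrt 2 • w.2)).1,
      (gE (Real.sqrt 2 • w.2)).2) with hF1def
  set F2 : ℂ × EuclideanSpace ℝ (Fin n) → ℂ × ℂ × EuclideanSpace ℝ (Fin n) :=
    fun w => (((Real.sqrt 2 : ℝ) : ℂ) * w.1, 0, Real.sqrt 2 • w.2) with hF2def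
  set Ψraw : ℂ × EuclideanSpace ℝ (Fin n) → ℂ × ℂ × EuclideanSpace ℝ (Fin n) :=
    fun w => if ‖w.2‖ ^ 2 ≤ 1/2 then F1 w else F2 w with hPsidef
  -- membership
  have hmem : ∀ w ∈ diskBoundary n, Ψraw w ∈ twistSpin n k J := by
    rintro ⟨c, z⟩ hw
    have hw' : ‖c‖ ^ 2 + ‖z‖ ^ 2 = 1 := hw
    have hysq : ‖Real.sqrt 2 • z‖ ^ 2 = 2 * ‖z‖ ^ 2 := by
      rw [norm_smul, Real.norm_eq_abs, abs_of_pos hs2pos, mul_pow, hs2sq]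
    by_cases hz : ‖z‖ ^ 2 ≤ 1/2
    · have hc2 : ‖c‖ ^ 2 = 1 - ‖z‖ ^ 2 := by linarith
      have hc0 : c ≠ 0 := by
        intro h
        rw [h] at hc2
        simp only [norm_zero] at hc2
        norm_num at hc2
        linarith
      have hyle : ‖Real.sqrt 2 • z‖ ≤ 1 := by
        nlinarith [norm_nonneg (Real.sqrt 2 • z)]
      have hpg : gE (Real.sqrt 2 • z) = g ⟨Real.sqrt 2 • z, hyle⟩ := gE_eq _ hyle
      have hQle : Q (gE (Real.sqrt 2 • z)) ≤ 1 := by rw [hpg]; exact hQg _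
      have hQ0 : 0 ≤ Q (gE (Real.sqrt 2 • z)) := by rw [hpg]; exact hQg0 _
      have hs1 : (1:ℝ) ≤ Real.sqrt (2 - Q (gE (Real.sqrt 2 • z))) := by
        calc (1:ℝ) = Real.sqrt 1 := Real.sqrt_one.symm
          _ ≤ _ := Real.sqrt_le_sqrt (by linarith)
      have hssq : Real.sqrt (2 - Q (gE (Real.sqrt 2 • z))) ^ 2
          = 2 - Q (gE (Real.sqrt 2 • z)) := Real.sq_sqrt (by linarith)
      have hθ : ‖c / (‖c‖ : ℂ)‖ = 1 := habs_theta c hc0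
      have hθ0 : c / (‖c‖ : ℂ) ≠ 0 := by
        intro h
        rw [h] at hθ
        simp at hθ
      have habs_a : ‖(c / (‖c‖ : ℂ)) *
          ((Real.sqrt (2 - Q (gE (Real.sqrt 2 • z))) : ℝ) : ℂ)‖
          = Real.sqrt (2 - Q (gE (Real.sqrt 2 • z))) := by
        rw [norm_mul, hθ, one_mul, Complex.norm_real, Real.norm_eq_abs, abs_of_nonneg (by linarith)]
      have habs_b : ‖(c / (‖c‖ : ℂ)) ^ k * (gE (Real.sqrt 2 • z)).1‖
          = ‖(gE (Real.sqrt 2 • z)).1‖ := by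
        rw [norm_mul, norm_zpow, hθ, one_zpow, one_mul]
      simp only [hPsidef, if_pos hz, hF1def]
      constructor
      · show ‖_‖ ^ 2 + ‖_‖ ^ 2 + ‖_‖ ^ 2 = 2
        rw [habs_a, habs_b, hssq]
        simp only [hQdef]
        ring
      · left
        constructor
        · rw [habs_a]; exact hs1
        · have hdiv : ((c / (‖c‖ : ℂ)) *
              ((Real.sqrt (2 - Q (gE (Real.sqrt 2 • z))) : ℝ) : ℂ)) /
              ((‖(c / (‖c‖ : ℂ)) *
                ((Real.sqrt (2 - Q (gE (Real.sqrt 2 • z))) : ℝ) : ℂ)‖ : ℝ) : ℂ)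
              = c / (‖c‖ : ℂ) := by
            rw [habs_a, mul_div_assoc, div_self
              (Complex.ofReal_ne_zero.mpr (by linarith)), mul_one]
          show (_ , _) ∈ J
          rw [hdiv]
          have hcan : (c / (‖c‖ : ℂ)) ^ (-k) *
              ((c / (‖c‖ : ℂ)) ^ k * (gE (Real.sqrt 2 • z)).1)
              = (gE (Real.sqrt 2 • z)).1 := by
            rw [← mul_assoc, ← zpow_add₀ hθ0]
            simp
          rw [hcan, hJ]
          exact ⟨⟨Real.sqrt 2 • z, hyle⟩, by rw [← hpg]⟩
    · have hzgt : 1/2 < ‖z‖ ^ 2 := not_le.mp hz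
      have hc2 : ‖c‖ ^ 2 = 1 - ‖z‖ ^ 2 := by linarith
      have habs_a : ‖((Real.sqrt 2 : ℝ) : ℂ) * c‖
          = Real.sqrt 2 * ‖c‖ := by
        rw [norm_mul, Complex.norm_real, Real.norm_eq_abs, abs_of_pos hs2pos]
      simp only [hPsidef, if_neg hz, hF2def]
      constructor
      · show ‖_‖ ^ 2 + ‖_‖ ^ 2 + ‖_‖ ^ 2 = 2
        rw [habs_a, norm_zero, hysq, mul_pow, hs2sq]
        norm_num
        nlinarith
      · right
        refine ⟨?_, rfl⟩
        rw [habs_a]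
        have ht2 : (Real.sqrt 2 * ‖c‖) ^ 2 < 1 := by
          rw [mul_pow, hs2sq]; nlinarith
        nlinarith [mul_nonneg hs2pos.le (norm_nonneg c),
          sq_nonneg (Real.sqrt 2 * ‖c‖ - 1)]
  set Ψ : ↥(diskBoundary n) → ↥(twistSpin n k J) :=
    fun w => ⟨Ψraw w.1, hmem _ w.2⟩ with hPsi2def
  have sq_eq_of_sq : ∀ r t : ℝ, 0 ≤ r → 0 ≤ t → r ^ 2 = t ^ 2 → r = t := by
    intro r t hr ht h
    calc r = Real.sqrt (r ^ 2) := (Real.sqrt_sq hr).symm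
      _ = Real.sqrt (t ^ 2) := by rw [h]
      _ = t := Real.sqrt_sq ht
  -- on the seam the two formulas agree
  have hseam : ∀ w : ℂ × EuclideanSpace ℝ (Fin n), w ∈ diskBoundary n →
      ‖w.2‖ ^ 2 = 1/2 → F1 w = F2 w := by
    rintro ⟨c, z⟩ hw hz
    have hw' : ‖c‖ ^ 2 + ‖z‖ ^ 2 = 1 := hw
    have hc2 : ‖c‖ ^ 2 = 1/2 := by
      simp only at hz hw' ⊢
      linarith
    have hcne : ‖c‖ ≠ 0 := by
      intro h
      rw [h] at hc2
      norm_num at hc2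
    have hysq : ‖Real.sqrt 2 • z‖ ^ 2 = 2 * ‖z‖ ^ 2 := by
      rw [norm_smul, Real.norm_eq_abs, abs_of_pos hs2pos, mul_pow, hs2sq]
    have hynorm : ‖Real.sqrt 2 • z‖ = 1 := by
      apply sq_eq_of_sq _ _ (norm_nonneg _) zero_le_one
      rw [hysq, one_pow]
      simp only at hz
      linarith
    have hpg : gE (Real.sqrt 2 • z) = (0, Real.sqrt 2 • z) := by
      rw [gE_eq _ hynorm.le]
      exact hgbd _ hynorm
    have hQ1 : Q (gE (Real.sqrt 2 • z)) = 1 := by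
      rw [hpg]
      simp only [hQdef, norm_zero]
      rw [hysq]
      simp only at hz
      rw [hz]
      norm_num
    have habs1 : Real.sqrt 2 * ‖c‖ = 1 := by
      apply sq_eq_of_sq _ _ (mul_nonneg hs2pos.le (norm_nonneg c)) zero_le_one
      rw [mul_pow, hs2sq, hc2]
      norm_num
    have hθeq : c / (‖c‖ : ℂ) = ((Real.sqrt 2 : ℝ) : ℂ) * c := by
      rw [div_eq_iff (Complex.ofReal_ne_zero.mpr hcne)]
      rw [show ((Real.sqrt 2 : ℝ) : ℂ) * c * ((‖c‖ : ℝ) : ℂ)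
        = c * (((Real.sqrt 2 * ‖c‖ : ℝ)) : ℂ) by push_cast; ring, habs1]
      simp
    have h21 : Real.sqrt (2 - 1) = 1 := by norm_num
    simp only [hF1def, hF2def]
    rw [hQ1, hpg, h21]
    simp [hθeq]
  have hcont : Continuous Ψ := by
    apply Continuous.subtype_mk
    have hval : Continuous (fun w : ↥(diskBoundary n) => (w : ℂ × EuclideanSpace ℝ (Fin n))) :=
      continuous_subtype_val
    have hc1 : Continuous (fun w : ↥(diskBoundary n) =>
        (w : ℂ × EuclideanSpace ℝ (Fin n)).1) := continuous_fst.comp hval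
    have hz1 : Continuous (fun w : ↥(diskBoundary n) =>
        (w : ℂ × EuclideanSpace ℝ (Fin n)).2) := continuous_snd.comp hval
    set A : Set ↥(diskBoundary n) :=
      {w | ‖(w : ℂ × EuclideanSpace ℝ (Fin n)).2‖ ^ 2 ≤ 1/2} with hAdef
    have hAclosed : IsClosed A := isClosed_le (by fun_prop) continuous_const
    have hfr : frontier A ⊆ {w : ↥(diskBoundary n) |
        ‖(w : ℂ × EuclideanSpace ℝ (Fin n)).2‖ ^ 2 = 1/2} :=
      frontier_le_subset_eq (by fun_prop) continuous_const
    have heqpw : (fun w : ↥(diskBoundary n) => Ψraw (w : ℂ × EuclideanSpace ℝ (Fin n))) =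
        A.piecewise (fun w => F1 (w : ℂ × EuclideanSpace ℝ (Fin n)))
          (fun w => F2 (w : ℂ × EuclideanSpace ℝ (Fin n))) := by
      funext w
      by_cases h : ‖(w : ℂ × EuclideanSpace ℝ (Fin n)).2‖ ^ 2 ≤ 1/2
      · have hA : w ∈ A := h
        rw [Set.piecewise_eq_of_mem _ _ _ hA]
        simp only [hPsidef, if_pos h]
      · have hA : w ∉ A := h
        rw [Set.piecewise_eq_of_notMem _ _ _ hA]
        simp only [hPsidef, if_neg h]
    rw [heqpw]
    apply continuous_piecewise
    · intro w hwfr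
      exact hseam _ w.2 (hfr hwfr)
    · rw [hAclosed.closure_eq]
      -- continuity of F1 ∘ val on A
      have hp : Continuous (fun w : ↥(diskBoundary n) =>
          gE (Real.sqrt 2 • (w : ℂ × EuclideanSpace ℝ (Fin n)).2)) :=
        gE_cont.comp (by fun_prop)
      have habsne : ∀ w ∈ A, ((‖(w : ℂ × EuclideanSpace ℝ (Fin n)).1‖ : ℝ) : ℂ) ≠ 0 := by
        intro w hwA
        have hw' : ‖(w : ℂ × EuclideanSpace ℝ (Fin n)).1‖ ^ 2
            + ‖(w : ℂ × EuclideanSpace ℝ (Fin n)).2‖ ^ 2 = 1 := w.2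
        have hz2 : ‖(w : ℂ × EuclideanSpace ℝ (Fin n)).2‖ ^ 2 ≤ 1/2 := hwA
        rw [Complex.ofReal_ne_zero]
        intro h
        rw [h] at hw'
        have h0 : (0:ℝ) ^ 2 = 0 := by norm_num
        rw [h0] at hw'
        linarith
      have hθcont : ContinuousOn (fun w : ↥(diskBoundary n) =>
          (w : ℂ × EuclideanSpace ℝ (Fin n)).1 /
            ((‖(w : ℂ × EuclideanSpace ℝ (Fin n)).1‖ : ℝ) : ℂ)) A :=
        ContinuousOn.div hc1.continuousOn
          (Complex.continuous_ofReal.comp (continuous_norm.comp hc1)).continuousOn habsne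
      have hθne : ∀ w ∈ A, (w : ℂ × EuclideanSpace ℝ (Fin n)).1 /
          ((‖(w : ℂ × EuclideanSpace ℝ (Fin n)).1‖ : ℝ) : ℂ) ≠ 0 := by
        intro w hwA
        apply div_ne_zero _ (habsne w hwA)
        intro h
        apply habsne w hwA
        rw [h]
        simp
      have hsqc : Continuous (fun w : ↥(diskBoundary n) =>
          ((Real.sqrt (2 - Q (gE (Real.sqrt 2 • (w : ℂ × EuclideanSpace ℝ (Fin n)).2))) : ℝ) : ℂ)) :=
        Complex.continuous_ofReal.comp
          (Real.continuous_sqrt.comp (continuous_const.sub (Q_cont.comp hp)))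
      simp only [hF1def]
      apply ContinuousOn.prodMk
      · exact hθcont.mul hsqc.continuousOn
      · apply ContinuousOn.prodMk
        · exact (hθcont.zpow₀ k (fun w hw => Or.inl (hθne w hw))).mul
            ((continuous_fst.comp hp).continuousOn)
        · exact (continuous_snd.comp hp).continuousOn
    · simp only [hF2def]
      exact Continuous.continuousOn (by fun_prop)
  have habs_mul_real : ∀ (u : ℂ) (r : ℝ), 0 ≤ r → ‖u‖ = 1 →
      ‖u * (r : ℂ)‖ = r := by
    intro u r hr hu
    rw [norm_mul, hu, one_mul, Complex.norm_real, Real.norm_eq_abs, abs_of_nonneg hr]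
  have hcase1 : ∀ (c : ℂ) (z : EuclideanSpace ℝ (Fin n)),
      ‖c‖ ^ 2 + ‖z‖ ^ 2 = 1 → ‖z‖ ^ 2 ≤ 1/2 →
      c ≠ 0 ∧ ‖Real.sqrt 2 • z‖ ≤ 1 ∧
      (1:ℝ) ≤ Real.sqrt (2 - Q (gE (Real.sqrt 2 • z))) := by
    intro c z hw hz
    have hysq : ‖Real.sqrt 2 • z‖ ^ 2 = 2 * ‖z‖ ^ 2 := by
      rw [norm_smul, Real.norm_eq_abs, abs_of_pos hs2pos, mul_pow, hs2sq]
    have hc0 : c ≠ 0 := by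
      intro h
      rw [h] at hw
      simp only [norm_zero] at hw
      have h0 : (0:ℝ) ^ 2 = 0 := by norm_num
      rw [h0] at hw
      linarith
    have hyle : ‖Real.sqrt 2 • z‖ ≤ 1 := by
      nlinarith [norm_nonneg (Real.sqrt 2 • z)]
    have hQle : Q (gE (Real.sqrt 2 • z)) ≤ 1 := by
      rw [gE_eq _ hyle]; exact hQg _
    refine ⟨hc0, hyle, ?_⟩
    calc (1:ℝ) = Real.sqrt 1 := Real.sqrt_one.symm
      _ ≤ _ := Real.sqrt_le_sqrt (by linarith)
  have hinj : Function.Injective Ψ := by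
    rintro ⟨⟨c, z⟩, hw⟩ ⟨⟨c', z'⟩, hw'⟩ h
    have hww : ‖c‖ ^ 2 + ‖z‖ ^ 2 = 1 := hw
    have hww' : ‖c'‖ ^ 2 + ‖z'‖ ^ 2 = 1 := hw'
    have hval : Ψraw (c, z) = Ψraw (c', z') := congrArg Subtype.val h
    apply Subtype.ext
    show ((c, z) : ℂ × EuclideanSpace ℝ (Fin n)) = (c', z')
    by_cases hz : ‖z‖ ^ 2 ≤ 1/2 <;> by_cases hz' : ‖z'‖ ^ 2 ≤ 1/2
    · -- both F1
      obtain ⟨hc0, hyle, hs1⟩ := hcase1 c z hww hz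
      obtain ⟨hc0', hyle', hs1'⟩ := hcase1 c' z' hww' hz'
      rw [hPsidef] at hval
      simp only [if_pos hz, if_pos hz'] at hval
      have h1 : (c / (‖c‖ : ℂ)) *
          ((Real.sqrt (2 - Q (gE (Real.sqrt 2 • z))) : ℝ) : ℂ)
          = (c' / (‖c'‖ : ℂ)) *
          ((Real.sqrt (2 - Q (gE (Real.sqrt 2 • z'))) : ℝ) : ℂ) :=
        congrArg Prod.fst hval
      have h2 : (c / (‖c‖ : ℂ)) ^ k * (gE (Real.sqrt 2 • z)).1
          = (c' / (‖c'‖ : ℂ)) ^ k * (gE (Real.sqrt 2 • z')).1 :=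
        congrArg (fun q => q.2.1) hval
      have h3 : (gE (Real.sqrt 2 • z)).2 = (gE (Real.sqrt 2 • z')).2 :=
        congrArg (fun q => q.2.2) hval
      have hθ : ‖c / (‖c‖ : ℂ)‖ = 1 := habs_theta c hc0
      have hθ' : ‖c' / (‖c'‖ : ℂ)‖ = 1 := habs_theta c' hc0'
      have hss : Real.sqrt (2 - Q (gE (Real.sqrt 2 • z)))
          = Real.sqrt (2 - Q (gE (Real.sqrt 2 • z'))) := by
        have := congrArg norm h1
        rwa [habs_mul_real _ _ (by linarith) hθ, habs_mul_real _ _ (by linarith) hθ'] at this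
      have hθθ : c / (‖c‖ : ℂ) = c' / (‖c'‖ : ℂ) := by
        rw [hss] at h1
        exact mul_right_cancel₀ (Complex.ofReal_ne_zero.mpr (by linarith)) h1
      have hp1 : (gE (Real.sqrt 2 • z)).1 = (gE (Real.sqrt 2 • z')).1 := by
        rw [hθθ] at h2
        refine mul_left_cancel₀ (zpow_ne_zero _ ?_) h2
        intro hh
        rw [hh] at hθ'
        simp at hθ'
      have hpp : gE (Real.sqrt 2 • z) = gE (Real.sqrt 2 • z') := Prod.ext hp1 h3
      rw [gE_eq _ hyle, gE_eq _ hyle'] at hpp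
      have hyy := hg.injective hpp
      have hzz : z = z' := by
        have h4 : Real.sqrt 2 • z = Real.sqrt 2 • z' := congrArg Subtype.val hyy
        exact smul_right_injective (EuclideanSpace ℝ (Fin n)) hs2pos.ne' h4
      have habseq : ‖c‖ = ‖c'‖ := by
        apply sq_eq_of_sq _ _ (norm_nonneg c) (norm_nonneg c')
        rw [hzz] at hww
        linarith
      have hcc : c = c' := by
        calc c = (c / (‖c‖ : ℂ)) * (‖c‖ : ℂ) :=
              (div_mul_cancel₀ c (Complex.ofReal_ne_zero.mpr ((norm_ne_zero_iff.mpr hc0)))).symm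
          _ = (c' / (‖c'‖ : ℂ)) * (‖c'‖ : ℂ) := by rw [hθθ, habseq]
          _ = c' := div_mul_cancel₀ c' (Complex.ofReal_ne_zero.mpr ((norm_ne_zero_iff.mpr hc0')))
      rw [hcc, hzz]
    · -- F1 / F2 : impossible
      exfalso
      obtain ⟨hc0, hyle, hs1⟩ := hcase1 c z hww hz
      rw [hPsidef] at hval
      simp only [if_pos hz, if_neg hz'] at hval
      have h1 : (c / (‖c‖ : ℂ)) *
          ((Real.sqrt (2 - Q (gE (Real.sqrt 2 • z))) : ℝ) : ℂ)
          = ((Real.sqrt 2 : ℝ) : ℂ) * c' := congrArg Prod.fst hval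
      have hθ : ‖c / (‖c‖ : ℂ)‖ = 1 := habs_theta c hc0
      have habs1 := congrArg norm h1
      rw [habs_mul_real _ _ (by linarith) hθ, norm_mul, Complex.norm_real, Real.norm_eq_abs,
        abs_of_pos hs2pos] at habs1
      have hc'2 : ‖c'‖ ^ 2 < 1/2 := by
        have := not_le.mp hz'
        nlinarith
      have ht2 : (Real.sqrt 2 * ‖c'‖) ^ 2 < 1 := by
        rw [mul_pow, hs2sq]; nlinarith
      nlinarith [mul_nonneg hs2pos.le (norm_nonneg c'),
        sq_nonneg (Real.sqrt 2 * ‖c'‖ - 1)]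
    · -- F2 / F1 : impossible
      exfalso
      obtain ⟨hc0', hyle', hs1'⟩ := hcase1 c' z' hww' hz'
      rw [hPsidef] at hval
      simp only [if_neg hz, if_pos hz'] at hval
      have h1 : ((Real.sqrt 2 : ℝ) : ℂ) * c
          = (c' / (‖c'‖ : ℂ)) *
          ((Real.sqrt (2 - Q (gE (Real.sqrt 2 • z'))) : ℝ) : ℂ) := congrArg Prod.fst hval
      have hθ' : ‖c' / (‖c'‖ : ℂ)‖ = 1 := habs_theta c' hc0'
      have habs1 := congrArg norm h1
      rw [habs_mul_real _ _ (by linarith) hθ', norm_mul, Complex.norm_real, Real.norm_eq_abs,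
        abs_of_pos hs2pos] at habs1
      have hc2 : ‖c‖ ^ 2 < 1/2 := by
        have := not_le.mp hz
        nlinarith
      have ht2 : (Real.sqrt 2 * ‖c‖) ^ 2 < 1 := by
        rw [mul_pow, hs2sq]; nlinarith
      nlinarith [mul_nonneg hs2pos.le (norm_nonneg c),
        sq_nonneg (Real.sqrt 2 * ‖c‖ - 1)]
    · -- both F2
      rw [hPsidef] at hval
      simp only [if_neg hz, if_neg hz'] at hval
      have h1 : ((Real.sqrt 2 : ℝ) : ℂ) * c = ((Real.sqrt 2 : ℝ) : ℂ) * c' :=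
        congrArg Prod.fst hval
      have h3 : Real.sqrt 2 • z = Real.sqrt 2 • z' := congrArg (fun q => q.2.2) hval
      have hcc : c = c' :=
        mul_left_cancel₀ (Complex.ofReal_ne_zero.mpr hs2pos.ne') h1
      have hzz : z = z' :=
        smul_right_injective (EuclideanSpace ℝ (Fin n)) hs2pos.ne' h3
      rw [hcc, hzz]
  have hinv_sq : ((Real.sqrt 2)⁻¹ : ℝ) ^ 2 = 1/2 := by
    rw [inv_pow, hs2sq]; norm_num
  have hzsq_gen : ∀ x : EuclideanSpace ℝ (Fin n),
      ‖(Real.sqrt 2)⁻¹ • x‖ ^ 2 = ‖x‖ ^ 2 / 2 := by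
    intro x
    rw [norm_smul, Real.norm_eq_abs, abs_of_pos (inv_pos.mpr hs2pos), mul_pow, hinv_sq]
    ring
  have hsmul_cancel : ∀ x : EuclideanSpace ℝ (Fin n),
      Real.sqrt 2 • ((Real.sqrt 2)⁻¹ • x) = x := by
    intro x
    rw [smul_smul, mul_inv_cancel₀ hs2pos.ne', one_smul]
  have hsurj : Function.Surjective Ψ := by
    rintro ⟨⟨a, b, x⟩, hq⟩
    obtain ⟨hS, hcl⟩ := hq
    have hS' : ‖a‖ ^ 2 + ‖b‖ ^ 2 + ‖x‖ ^ 2 = 2 := hS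
    rcases hcl with ⟨ha1, hpJ⟩ | ⟨ha2, hb0⟩
    · -- clause 1 : the spun-disk part
      have ha0 : a ≠ 0 := by
        intro h
        rw [h] at ha1
        simp at ha1
        linarith
      have haθ : ‖a / (‖a‖ : ℂ)‖ = 1 := habs_theta a ha0
      have haθ0 : a / (‖a‖ : ℂ) ≠ 0 := by
        intro h
        rw [h] at haθ
        simp at haθ
      rw [hJ] at hpJ
      obtain ⟨y0, hy0⟩ := hpJ
      set z : EuclideanSpace ℝ (Fin n) := (Real.sqrt 2)⁻¹ • (y0 : EuclideanSpace ℝ (Fin n))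
        with hzdef
      have hz2 : ‖z‖ ^ 2 = ‖(y0 : EuclideanSpace ℝ (Fin n))‖ ^ 2 / 2 := hzsq_gen _
      have hzle : ‖z‖ ^ 2 ≤ 1/2 := by
        have h1 : ‖(y0 : EuclideanSpace ℝ (Fin n))‖ ≤ 1 := y0.2
        have h2 : ‖(y0 : EuclideanSpace ℝ (Fin n))‖ ^ 2 ≤ 1 := by
          nlinarith [norm_nonneg (y0 : EuclideanSpace ℝ (Fin n))]
        linarith [hz2]
      have ht0 : (0:ℝ) ≤ 1 - ‖z‖ ^ 2 := by linarith
      have htsq : Real.sqrt (1 - ‖z‖ ^ 2) ^ 2 = 1 - ‖z‖ ^ 2 := Real.sq_sqrt ht0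
      have htpos : 0 < Real.sqrt (1 - ‖z‖ ^ 2) := Real.sqrt_pos.mpr (by linarith)
      set c : ℂ := (a / (‖a‖ : ℂ)) * ((Real.sqrt (1 - ‖z‖ ^ 2) : ℝ) : ℂ) with hcdef
      have hcabs : ‖c‖ = Real.sqrt (1 - ‖z‖ ^ 2) :=
        habs_mul_real _ _ (Real.sqrt_nonneg _) haθ
      have hmemT : (c, z) ∈ diskBoundary n := by
        show ‖c‖ ^ 2 + ‖z‖ ^ 2 = 1
        rw [hcabs, htsq]
        ring
      refine ⟨⟨(c, z), hmemT⟩, Subtype.ext ?_⟩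
      show Ψraw (c, z) = (a, b, x)
      rw [hPsidef]
      simp only [if_pos hzle, hF1def]
      have hθc : c / (‖c‖ : ℂ) = a / (‖a‖ : ℂ) := by
        rw [hcabs, hcdef]
        exact mul_div_cancel_right₀ _ (Complex.ofReal_ne_zero.mpr htpos.ne')
      have h2z : Real.sqrt 2 • z = (y0 : EuclideanSpace ℝ (Fin n)) := hsmul_cancel _
      have hgEy : gE (Real.sqrt 2 • z) = ((a / (‖a‖ : ℂ)) ^ (-k) * b, x) := by
        rw [h2z, gE_eq _ y0.2, Subtype.coe_eta]
        exact hy0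
      have hQp : Q (gE (Real.sqrt 2 • z)) = ‖b‖ ^ 2 + ‖x‖ ^ 2 := by
        rw [hgEy]
        simp only [hQdef]
        rw [norm_mul, norm_zpow, haθ, one_zpow, one_mul]
      have hs_eq : Real.sqrt (2 - Q (gE (Real.sqrt 2 • z))) = ‖a‖ := by
        rw [hQp, show 2 - (‖b‖ ^ 2 + ‖x‖ ^ 2) = ‖a‖ ^ 2 by linarith,
          Real.sqrt_sq (norm_nonneg a)]
      refine Prod.ext ?_ (Prod.ext ?_ ?_)
      · show (c / (‖c‖ : ℂ)) *
            ((Real.sqrt (2 - Q (gE (Real.sqrt 2 • z))) : ℝ) : ℂ) = a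
        rw [hθc, hs_eq]
        exact div_mul_cancel₀ a
          (Complex.ofReal_ne_zero.mpr ((norm_ne_zero_iff.mpr ha0)))
      · show (c / (‖c‖ : ℂ)) ^ k * (gE (Real.sqrt 2 • z)).1 = b
        rw [hθc, hgEy]
        show (a / (‖a‖ : ℂ)) ^ k * ((a / (‖a‖ : ℂ)) ^ (-k) * b) = b
        rw [← mul_assoc, ← zpow_add₀ haθ0]
        simp
      · show (gE (Real.sqrt 2 • z)).2 = x
        rw [hgEy]
    · -- clause 2 : the core part
      have hb0' : b = 0 := hb0
      have hax : ‖a‖ ^ 2 + ‖x‖ ^ 2 = 2 := by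
        rw [hb0'] at hS'
        simpa using hS' 
      set c : ℂ := (((Real.sqrt 2)⁻¹ : ℝ) : ℂ) * a with hcdef
      set z : EuclideanSpace ℝ (Fin n) := (Real.sqrt 2)⁻¹ • x with hzdef
      have habsc : ‖c‖ = (Real.sqrt 2)⁻¹ * ‖a‖ := by
        rw [hcdef, norm_mul, Complex.norm_real, Real.norm_eq_abs, abs_of_pos (inv_pos.mpr hs2pos)]
      have hz2 : ‖z‖ ^ 2 = ‖x‖ ^ 2 / 2 := hzsq_gen _
      have hmemT : (c, z) ∈ diskBoundary n := by
        show ‖c‖ ^ 2 + ‖z‖ ^ 2 = 1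
        rw [habsc, hz2, mul_pow, hinv_sq]
        linarith
      refine ⟨⟨(c, z), hmemT⟩, Subtype.ext ?_⟩
      show Ψraw (c, z) = (a, b, x)
      rw [hb0']
      rcases lt_or_eq_of_le ha2 with halt | haeq
      · -- |a| < 1 : interior of the core, F2 applies
        have hasq : ‖a‖ ^ 2 < 1 := by
          nlinarith [norm_nonneg a]
        have hznle : ¬ (‖z‖ ^ 2 ≤ 1/2) := by
          rw [hz2]
          push_neg
          linarith
        rw [hPsidef]
        simp only [if_neg hznle, hF2def]
        refine Prod.ext ?_ (Prod.ext rfl ?_)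
        · show ((Real.sqrt 2 : ℝ) : ℂ) * c = a
          rw [hcdef, ← mul_assoc, ← Complex.ofReal_mul,
            mul_inv_cancel₀ hs2pos.ne', Complex.ofReal_one, one_mul]
        · exact hsmul_cancel x
      · -- |a| = 1 : the seam, F1 applies
        have haeq' : ‖a‖ = 1 := haeq
        have hx1 : ‖x‖ ^ 2 = 1 := by
          rw [haeq'] at hax
          linarith
        have hxnorm : ‖x‖ = 1 := sq_eq_of_sq _ _ (norm_nonneg x) zero_le_one (by rw [hx1]; norm_num)
        have hzle : ‖z‖ ^ 2 ≤ 1/2 := by rw [hz2, hx1]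
        rw [hPsidef]
        simp only [if_pos hzle, hF1def]
        have hcabs : ‖c‖ = (Real.sqrt 2)⁻¹ := by rw [habsc, haeq', mul_one]
        have hinvne : (((Real.sqrt 2)⁻¹ : ℝ) : ℂ) ≠ 0 :=
          Complex.ofReal_ne_zero.mpr (inv_pos.mpr hs2pos).ne'
        have hθc : c / (‖c‖ : ℂ) = a := by
          rw [hcabs, hcdef]
          exact mul_div_cancel_left₀ _ hinvne
        have h2z : Real.sqrt 2 • z = x := hsmul_cancel x
        have hgEy : gE (Real.sqrt 2 • z) = (0, x) := by
          rw [h2z, gE_eq _ hxnorm.le]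
          exact hgbd ⟨x, hxnorm.le⟩ hxnorm
        have hQp : Q (gE (Real.sqrt 2 • z)) = 1 := by
          rw [hgEy]
          simp only [hQdef]
          simp [hx1]
        have hs_eq : Real.sqrt (2 - Q (gE (Real.sqrt 2 • z))) = 1 := by
          rw [hQp]
          norm_num
        refine Prod.ext ?_ (Prod.ext ?_ ?_)
        · show (c / (‖c‖ : ℂ)) *
              ((Real.sqrt (2 - Q (gE (Real.sqrt 2 • z))) : ℝ) : ℂ) = a
          rw [hθc, hs_eq]
          simp
        · show (c / (‖c‖ : ℂ)) ^ k * (gE (Real.sqrt 2 • z)).1 = 0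
          rw [hgEy]
          simp
        · show (gE (Real.sqrt 2 • z)).2 = x
          rw [hgEy]
  haveI : CompactSpace ↥(diskBoundary n) := e.symm.compactSpace
  exact ⟨(Continuous.homeoOfEquivCompactToT2
    (f := Equiv.ofBijective Ψ ⟨hinj, hsurj⟩) hcont).symm.trans e⟩

end
end
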